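/- Let q ≥ 4 be an integer, ε ∈ (0, 1/2], n ≥ 1, and let ρ ≥ 1 be a real number such that α_ε^{1/ρ} ≤ 1/2 if q is even, and α_ε^{1/ρ} ≤ 1/(2 cos(π/q)) if q is odd. Then the minimum of Qⁿ(ρ, P) over all probability mass functions P on (ZMod q)ⁿ equals ((1 + 2 α_ε^{1/ρ})/q)ⁿ; equivalently, E_x^n(ρ) := −(ρ/n) log₂ min_P Qⁿ(ρ, P) = ρ log₂( q/(1 + 2 α_ε^{1/ρ}) ). -/

import Mathlib

/-- The typewriter channel transition probabilities on `ZMod q`. -/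
noncomputable def W (q : ℕ) (ε : ℝ) (y x : ZMod q) : ℝ :=
  if y = x then 1 - ε else if y = x + 1 then ε else 0

/-- `α_ε = √(ε(1-ε))`. -/
noncomputable def alphaE (ε : ℝ) : ℝ := Real.sqrt (ε * (1 - ε))

/-- Single-letter Bhattacharyya kernel `g₁(a,b) = Σ_y √(W(y|a) W(y|b))`. -/
noncomputable def g1 (q : ℕ) [NeZero q] (ε : ℝ) (a b : ZMod q) : ℝ :=
  ∑ y : ZMod q, Real.sqrt (W q ε y a * W q ε y b)

/-- `gₙ(x,x') = ∏ₖ g₁(xₖ, x'ₖ)`. -/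
noncomputable def gn (q : ℕ) [NeZero q] (n : ℕ) (ε : ℝ) (x x' : Fin n → ZMod q) : ℝ :=
  ∏ k, g1 q ε (x k) (x' k)

/-- The quadratic form `Qⁿ(ρ, P) = Σ_{x,x'} P(x)P(x') gₙ(x,x')^{1/ρ}`
(real `rpow`, so `0^{1/ρ} = 0` for `ρ ≥ 1`). -/
noncomputable def Qn (q : ℕ) [NeZero q] (n : ℕ) (ε ρ : ℝ)
    (P : (Fin n → ZMod q) → ℝ) : ℝ :=
  ∑ x : Fin n → ZMod q, ∑ x' : Fin n → ZMod q,
    P x * P x' * (gn q n ε x x') ^ (1 / ρ)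

open Finset

section helpers
variable (q : ℕ) [NeZero q]

lemma zmod_one_ne_zero (hq : 4 ≤ q) : (1 : ZMod q) ≠ 0 := by
  haveI : Fact (1 < q) := ⟨by omega⟩
  exact one_ne_zero

lemma zmod_two_ne_zero (hq : 4 ≤ q) : (2 : ZMod q) ≠ 0 := by
  have h : ((2:ℕ) : ZMod q) ≠ 0 := by
    rw [Ne, ZMod.natCast_eq_zero_iff]
    intro h
    exact absurd (Nat.le_of_dvd two_pos h) (by omega)
  simpa using h

lemma sum_two_ind (t u : ZMod q) (htu : t ≠ u) (c d : ℝ) :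
    ∑ y : ZMod q, (if y = t then c else if y = u then d else 0) = c + d := by
  have h : ∀ y : ZMod q, (if y = t then c else if y = u then d else 0)
      = (if y = t then c else 0) + (if y = u then d else 0) := by
    intro y
    by_cases h1 : y = t
    · subst h1
      simp [htu]
    · simp [h1]
  rw [Finset.sum_congr rfl (fun y _ => h y), Finset.sum_add_distrib]
  simp

lemma W_nonneg (ε : ℝ) (hε : 0 < ε) (hε' : ε ≤ 1/2) (y x : ZMod q) : 0 ≤ W q ε y x := by
  unfold W; split_ifs <;> linarith

lemma g1_eq (hq : 4 ≤ q) (ε : ℝ) (hε : 0 < ε) (hε' : ε ≤ 1/2) (a b : ZMod q) :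
    g1 q ε a b = if a = b then 1 else if b = a + 1 ∨ a = b + 1 then alphaE ε else 0 := by
  have h1 := zmod_one_ne_zero q hq
  have h2 := zmod_two_ne_zero q hq
  have hne : ∀ c : ZMod q, c ≠ c + 1 := by
    intro c hc
    exact h1 (by linear_combination (hc.symm : c + 1 = c))
  have hne2 : ∀ c : ZMod q, c ≠ c + 2 := by
    intro c hc
    exact h2 (by linear_combination (hc.symm : c + 2 = c))
  have key : ∀ a b : ZMod q, b = a + 1 → g1 q ε a b = alphaE ε := by
    intro a b hb
    subst hb
    have hab : a ≠ a + 1 := hne a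
    have hab' : a ≠ (a + 1) + 1 := by
      intro h; exact hne2 a (by linear_combination h)
    have hpt : ∀ y : ZMod q, Real.sqrt (W q ε y a * W q ε y (a+1)) =
        if y = a + 1 then alphaE ε else 0 := by
      intro y
      by_cases hyb : y = a + 1
      · subst hyb
        have e1 : W q ε (a+1) a = ε := by
          unfold W; rw [if_neg hab.symm, if_pos rfl]
        have e2 : W q ε (a+1) (a+1) = 1 - ε := by unfold W; rw [if_pos rfl]
        rw [e1, e2, if_pos rfl]
        rfl
      · rw [if_neg hyb]
        by_cases hya : y = a
        · have e : W q ε y (a+1) = 0 := by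
            unfold W
            rw [if_neg (by rw [hya]; exact hab), if_neg (by rw [hya]; exact hab')]
          rw [e, mul_zero, Real.sqrt_zero]
        · have e : W q ε y a = 0 := by
            unfold W
            rw [if_neg hya, if_neg hyb]
          rw [e, zero_mul, Real.sqrt_zero]
    unfold g1
    rw [Finset.sum_congr rfl (fun y _ => hpt y)]
    simp
  have hsymm : ∀ a b : ZMod q, g1 q ε a b = g1 q ε b a := by
    intro a b
    unfold g1
    exact Finset.sum_congr rfl (fun y _ => by rw [mul_comm])
  by_cases hab : a = b
  · subst hab
    rw [if_pos rfl]
    have hpt : ∀ y : ZMod q, Real.sqrt (W q ε y a * W q ε y a) = W q ε y a := by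
      intro y; exact Real.sqrt_mul_self (W_nonneg q ε hε hε' y a)
    unfold g1
    rw [Finset.sum_congr rfl (fun y _ => hpt y)]
    unfold W
    rw [sum_two_ind q a (a+1) (hne a) (1-ε) ε]
    ring
  · rw [if_neg hab]
    by_cases hb : b = a + 1
    · rw [if_pos (Or.inl hb), key a b hb]
    · by_cases ha : a = b + 1
      · rw [if_pos (Or.inr ha), hsymm, key b a ha]
      · rw [if_neg (by tauto)]
        have hpt : ∀ y : ZMod q, Real.sqrt (W q ε y a * W q ε y b) = 0 := by
          intro y
          by_cases hya : y = a
          · have : W q ε y b = 0 := by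
              unfold W
              rw [if_neg (by rw [hya]; exact hab), if_neg (by rw [hya]; exact ha)]
            rw [this, mul_zero, Real.sqrt_zero]
          · by_cases hya1 : y = a + 1
            · have : W q ε y b = 0 := by
                unfold W
                rw [if_neg (by rw [hya1]; exact fun h => hb h.symm),
                    if_neg (by rw [hya1]; intro h; exact hab (by linear_combination h))]
              rw [this, mul_zero, Real.sqrt_zero]
            · have : W q ε y a = 0 := by unfold W; rw [if_neg hya, if_neg hya1]
              rw [this, zero_mul, Real.sqrt_zero]
        unfold g1
        rw [Finset.sum_congr rfl (fun y _ => hpt y)]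
        simp

end helpers

section fourier
variable (q : ℕ) [NeZero q]

noncomputable def om (q : ℕ) : ℂ := Complex.exp (2 * Real.pi * Complex.I / q)

noncomputable def chi (q : ℕ) [NeZero q] (c : ZMod q) : ℂ := om q ^ c.val

lemma om_pow_q : om q ^ q = 1 := by
  unfold om
  rw [← Complex.exp_nat_mul]
  have hq0 : (q : ℂ) ≠ 0 := Nat.cast_ne_zero.mpr (NeZero.ne q)
  have h : (q:ℂ) * (2 * Real.pi * Complex.I / q) = 2 * Real.pi * Complex.I := by
    field_simp
  rw [h, Complex.exp_two_pi_mul_I]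

lemma om_pow_mod (m : ℕ) : om q ^ (m % q) = om q ^ m := by
  conv_rhs => rw [← Nat.div_add_mod m q]
  rw [pow_add, pow_mul, om_pow_q, one_pow, one_mul]

lemma chi_add (c d : ZMod q) : chi q (c + d) = chi q c * chi q d := by
  unfold chi
  rw [← pow_add, ZMod.val_add, om_pow_mod]

lemma chi_zero : chi q (0 : ZMod q) = 1 := by
  unfold chi
  rw [ZMod.val_zero, pow_zero]

lemma chi_ne_zero (c : ZMod q) : chi q c ≠ 0 :=
  pow_ne_zero _ (Complex.exp_ne_zero _)

lemma chi_exp (c : ZMod q) : chi q c = Complex.exp ((2 * Real.pi * c.val / q : ℝ) * Complex.I) := by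
  unfold chi om
  rw [← Complex.exp_nat_mul]
  congr 1
  push_cast
  ring

lemma chi_ne_one (c : ZMod q) (hc : c ≠ 0) : chi q c ≠ 1 := by
  rw [chi_exp]
  intro h
  rw [Complex.exp_eq_one_iff] at h
  obtain ⟨k, hk⟩ := h
  have hk2 : ((2 * Real.pi * c.val / q : ℝ) : ℂ) * Complex.I
      = ((2 * Real.pi * k : ℝ) : ℂ) * Complex.I := by
    rw [hk]; push_cast; ring
  have hr : (2 * Real.pi * c.val / q : ℝ) = 2 * Real.pi * k := by
    have := mul_right_cancel₀ Complex.I_ne_zero hk2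
    exact_mod_cast this
  have hq0 : (0:ℝ) < q := by
    have := NeZero.pos q
    exact_mod_cast this
  have hval : (c.val : ℝ) = k * q := by
    have hπ' : (2:ℝ) * Real.pi ≠ 0 := by positivity
    have h3 : 2 * Real.pi * (c.val:ℝ) = 2 * Real.pi * ((k:ℝ) * q) := by
      calc 2 * Real.pi * (c.val:ℝ) = (2 * Real.pi * (c.val:ℝ) / q) * q :=
            (div_mul_cancel₀ _ (ne_of_gt hq0)).symm
        _ = (2 * Real.pi * (k:ℝ)) * q := by rw [hr]
        _ = 2 * Real.pi * ((k:ℝ) * q) := by ring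
    exact mul_left_cancel₀ hπ' h3
  have hvZ : (c.val : ℤ) = k * q := by exact_mod_cast hval
  have hvpos : 0 < c.val := Nat.pos_of_ne_zero (fun h => hc ((ZMod.val_eq_zero c).mp h))
  have h1 : (0:ℤ) < (c.val : ℤ) := by exact_mod_cast hvpos
  have h2 : (c.val : ℤ) < q := by exact_mod_cast ZMod.val_lt c
  have hqZ : (0:ℤ) < q := by exact_mod_cast NeZero.pos q
  rcases le_or_gt k 0 with h | h
  · nlinarith
  · have : (1:ℤ) ≤ k := h
    nlinarith

lemma sum_chi (c : ZMod q) :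
    ∑ j : ZMod q, chi q (c * j) = if c = 0 then (q : ℂ) else 0 := by
  by_cases hc : c = 0
  · subst hc
    simp [chi_zero]
  · rw [if_neg hc]
    set S := ∑ j : ZMod q, chi q (c * j) with hS
    have hshift0 : ∑ j : ZMod q, chi q (c * (j + 1)) = S :=
      Fintype.sum_equiv (Equiv.addRight 1) _ _ (fun j => rfl)
    have hshift : S = chi q c * S := by
      calc S = ∑ j : ZMod q, chi q (c * (j + 1)) := hshift0.symm
        _ = ∑ j : ZMod q, chi q c * chi q (c * j) :=
            Finset.sum_congr rfl (fun j _ => by rw [mul_add, mul_one, chi_add]; ring)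
        _ = chi q c * S := (Finset.mul_sum _ _ _).symm
    have hz : (chi q c - 1) * S = 0 := by linear_combination -hshift
    rcases mul_eq_zero.mp hz with h | h
    · exact absurd (by linear_combination h) (chi_ne_one q c hc)
    · exact h

lemma chi_neg (c : ZMod q) : chi q (-c) = (chi q c)⁻¹ :=
  eq_inv_of_mul_eq_one_left (by rw [← chi_add, neg_add_cancel, chi_zero])

lemma chi_conj (c : ZMod q) : (starRingEnd ℂ) (chi q c) = chi q (-c) := by
  have habs : Complex.normSq (chi q c) = 1 := by
    rw [chi_exp, Complex.normSq_eq_norm_sq, Complex.norm_exp]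
    simp
  rw [chi_neg, Complex.inv_def, habs]
  simp

lemma chi_add_conj (j : ZMod q) :
    chi q j + chi q (-j) = ((2 * Real.cos (2 * Real.pi * j.val / q) : ℝ) : ℂ) := by
  rw [← chi_conj, Complex.add_conj, chi_exp, Complex.exp_ofReal_mul_I_re]

end fourier

noncomputable def Amat (q : ℕ) (β : ℝ) (a b : ZMod q) : ℝ :=
  if a = b then 1 else if b = a + 1 ∨ a = b + 1 then β else 0

section amat
variable (q : ℕ) [NeZero q]

lemma Amat_symm (β : ℝ) (a b : ZMod q) : Amat q β a b = Amat q β b a := by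
  unfold Amat
  by_cases h : a = b
  · simp [h]
  · split_ifs <;> first | rfl | simp_all | tauto

lemma Amat_expand (hq : 4 ≤ q) (β : ℝ) (a b : ZMod q) :
    Amat q β a b = (if b = a then (1:ℝ) else 0) + (if b = a + 1 then β else 0)
      + (if b = a - 1 then β else 0) := by
  have h1 := zmod_one_ne_zero q hq
  have h2 := zmod_two_ne_zero q hq
  unfold Amat
  by_cases hb : b = a
  · subst hb
    rw [if_pos rfl, if_pos rfl, if_neg (fun h : b = b + 1 => h1 (by linear_combination -h)),
      if_neg (fun h : b = b - 1 => h1 (by linear_combination h))]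
    ring
  · rw [if_neg (fun h => hb h.symm), if_neg hb]
    by_cases hb1 : b = a + 1
    · rw [if_pos (Or.inl hb1), if_pos hb1,
        if_neg (fun h : b = a - 1 => h2 (by linear_combination h - hb1))]
      ring
    · rw [if_neg hb1]
      by_cases hb2 : b = a - 1
      · rw [if_pos (Or.inr (by linear_combination -hb2)), if_pos hb2]
        ring
      · rw [if_neg (by
          rintro (h | h)
          · exact hb1 h
          · exact hb2 (by linear_combination -h)), if_neg hb2]
        ring

lemma Amat_row (hq : 4 ≤ q) (β : ℝ) (a : ZMod q) :
    ∑ b : ZMod q, Amat q β a b = 1 + 2 * β := by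
  rw [Finset.sum_congr rfl (fun b _ => Amat_expand q hq β a b)]
  rw [Finset.sum_add_distrib, Finset.sum_add_distrib]
  simp only [Finset.sum_ite_eq', Finset.mem_univ, if_true]
  ring

lemma Amat_col (hq : 4 ≤ q) (β : ℝ) (b : ZMod q) :
    ∑ a : ZMod q, Amat q β a b = 1 + 2 * β := by
  rw [Finset.sum_congr rfl (fun a _ => Amat_symm q β a b), Amat_row q hq]

lemma sum_chi_triple (hq : 4 ≤ q) (β : ℝ) (a b : ZMod q) :
    ∑ j : ZMod q, (chi q ((a - b) * j) + β * chi q ((a - b + 1) * j)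
      + β * chi q ((a - b - 1) * j))
    = (q : ℂ) * ((Amat q β a b : ℝ) : ℂ) := by
  have h1 := zmod_one_ne_zero q hq
  have h2 := zmod_two_ne_zero q hq
  rw [Finset.sum_add_distrib, Finset.sum_add_distrib, ← Finset.mul_sum, ← Finset.mul_sum,
    sum_chi, sum_chi, sum_chi]
  unfold Amat
  by_cases hab : a = b
  · subst hab
    rw [if_pos (by ring), if_neg (fun h : a - a + 1 = 0 => h1 (by linear_combination h)),
      if_neg (fun h : a - a - 1 = 0 => h1 (by linear_combination -h)), if_pos rfl]
    push_cast
    ring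
  · rw [if_neg (fun h : a - b = 0 => hab (by linear_combination h)), if_neg hab]
    by_cases hb1 : b = a + 1
    · rw [if_pos (by linear_combination -hb1), 
        if_neg (fun h : a - b - 1 = 0 => h2 (by linear_combination - h - hb1)),
        if_pos (Or.inl hb1)]
      push_cast
      ring
    · rw [if_neg (fun h : a - b + 1 = 0 => hb1 (by linear_combination -h))]
      by_cases hb2 : a = b + 1
      · rw [if_pos (by linear_combination hb2), if_pos (Or.inr hb2)]
        push_cast
        ring
      · rw [if_neg (fun h : a - b - 1 = 0 => hb2 (by linear_combination h)),
          if_neg (by tauto)]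
        push_cast
        ring

end amat

section psd
variable (q : ℕ) [NeZero q]

lemma Amat_psd (hq : 4 ≤ q) (β : ℝ)
    (hlam : ∀ j : ZMod q, 0 ≤ 1 + 2 * β * Real.cos (2 * Real.pi * j.val / q))
    (x : ZMod q → ℝ) :
    0 ≤ ∑ a : ZMod q, ∑ b : ZMod q, x a * x b * Amat q β a b := by
  set F : ZMod q → ℂ := fun j => ∑ a : ZMod q, (x a : ℂ) * chi q (j * a) with hF
  have hconjF : ∀ j, (starRingEnd ℂ) (F j) = ∑ b : ZMod q, (x b : ℂ) * chi q (-(j * b)) := by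
    intro j
    rw [hF, map_sum]
    refine Finset.sum_congr rfl (fun b _ => ?_)
    rw [map_mul, chi_conj, Complex.conj_ofReal]
  have key1 : ∀ j : ZMod q,
      (((1 + 2 * β * Real.cos (2 * Real.pi * j.val / q)) * Complex.normSq (F j) : ℝ) : ℂ)
      = ∑ a : ZMod q, ∑ b : ZMod q, (x a : ℂ) * (x b : ℂ) *
          (chi q ((a - b) * j) + β * chi q ((a - b + 1) * j) + β * chi q ((a - b - 1) * j)) := by
    intro j
    have hco : ((1 + 2 * β * Real.cos (2 * Real.pi * j.val / q) : ℝ) : ℂ)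
        = 1 + β * chi q j + β * chi q (-j) := by
      have h := chi_add_conj q j
      push_cast at h ⊢
      linear_combination -(β : ℂ) * h
    calc (((1 + 2 * β * Real.cos (2 * Real.pi * j.val / q)) * Complex.normSq (F j) : ℝ) : ℂ)
        = ((1 + 2 * β * Real.cos (2 * Real.pi * j.val / q) : ℝ) : ℂ)
            * (F j * (starRingEnd ℂ) (F j)) := by
          rw [Complex.mul_conj]
          push_cast
          ring
      _ = (1 + β * chi q j + β * chi q (-j)) *
            ((∑ a : ZMod q, (x a : ℂ) * chi q (j * a)) *
             (∑ b : ZMod q, (x b : ℂ) * chi q (-(j * b)))) := by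
          rw [hco, hconjF]
      _ = ∑ a : ZMod q, ∑ b : ZMod q, (x a : ℂ) * (x b : ℂ) *
          (chi q ((a - b) * j) + β * chi q ((a - b + 1) * j) + β * chi q ((a - b - 1) * j)) := by
          rw [Finset.sum_mul_sum]
          rw [Finset.mul_sum]
          refine Finset.sum_congr rfl (fun a _ => ?_)
          rw [Finset.mul_sum]
          refine Finset.sum_congr rfl (fun b _ => ?_)
          have e1 : chi q ((a - b) * j) = chi q (j * a) * chi q (-(j * b)) := by
            rw [← chi_add]; congr 1; ring
          have e2 : chi q ((a - b + 1) * j) = chi q j * (chi q (j * a) * chi q (-(j * b))) := by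
            rw [← chi_add, ← chi_add]; congr 1; ring
          have e3 : chi q ((a - b - 1) * j) = chi q (-j) * (chi q (j * a) * chi q (-(j * b))) := by
            rw [← chi_add, ← chi_add]; congr 1; ring
          rw [e1, e2, e3]
          ring
  have key2 : ∑ j : ZMod q,
      (((1 + 2 * β * Real.cos (2 * Real.pi * j.val / q)) * Complex.normSq (F j) : ℝ) : ℂ)
      = (q : ℂ) * ∑ a : ZMod q, ∑ b : ZMod q, ((x a * x b * Amat q β a b : ℝ) : ℂ) := by
    rw [Finset.sum_congr rfl (fun j _ => key1 j), Finset.sum_comm]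
    rw [Finset.mul_sum]
    refine Finset.sum_congr rfl (fun a _ => ?_)
    rw [Finset.sum_comm, Finset.mul_sum]
    refine Finset.sum_congr rfl (fun b _ => ?_)
    rw [← Finset.mul_sum, sum_chi_triple q hq β a b]
    push_cast
    ring
  have hmain : (q : ℝ) * (∑ a : ZMod q, ∑ b : ZMod q, x a * x b * Amat q β a b)
      = ∑ j : ZMod q, (1 + 2 * β * Real.cos (2 * Real.pi * j.val / q)) * Complex.normSq (F j) := by
    apply Complex.ofReal_injective
    push_cast
    push_cast at key2
    linear_combination -key2
  have hnn : 0 ≤ ∑ j : ZMod q, (1 + 2 * β * Real.cos (2 * Real.pi * j.val / q))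
      * Complex.normSq (F j) :=
    Finset.sum_nonneg (fun j _ => mul_nonneg (hlam j) (Complex.normSq_nonneg _))
  have hqpos : (0:ℝ) < q := by
    have := NeZero.pos q
    exact_mod_cast this
  nlinarith [hmain, hnn]

end psd

lemma lam_nonneg (q : ℕ) [NeZero q] (hq : 4 ≤ q) (β : ℝ) (hβ : 0 ≤ β)
    (heven : Even q → β ≤ 1 / 2)
    (hodd : Odd q → β ≤ 1 / (2 * Real.cos (Real.pi / q))) :
    ∀ j : ZMod q, 0 ≤ 1 + 2 * β * Real.cos (2 * Real.pi * j.val / q) := by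
  intro j
  have hqR : (0:ℝ) < q := by exact_mod_cast (by omega : 0 < q)
  rcases Nat.even_or_odd q with hev | hod
  · have h1 : -1 ≤ Real.cos (2 * Real.pi * j.val / q) := Real.neg_one_le_cos _
    have hβ2 := heven hev
    nlinarith
  · have hπq2 : Real.pi / q < Real.pi / 2 := by
      apply div_lt_div_of_pos_left Real.pi_pos (by norm_num) _
      exact_mod_cast (by omega : 2 < q)
    have hπq0 : 0 < Real.pi / q := div_pos Real.pi_pos hqR
    have hcq : 0 < Real.cos (Real.pi / q) :=
      Real.cos_pos_of_mem_Ioo ⟨by linarith [Real.pi_pos], hπq2⟩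
    have hβ2 := hodd hod
    have hβ3 : 2 * β * Real.cos (Real.pi / q) ≤ 1 := by
      have h := mul_le_mul_of_nonneg_right hβ2
        (by positivity : (0:ℝ) ≤ 2 * Real.cos (Real.pi / q))
      rw [one_div, inv_mul_cancel₀ (by positivity)] at h
      linarith
    -- key: cos (2π m / q) ≥ - cos (π/q)
    set m := j.val with hm
    have hmq : m < q := ZMod.val_lt j
    have hodd' : q % 2 = 1 := Nat.odd_iff.mp hod
    set t : ℤ := (q : ℤ) - 2 * m with ht
    have ht0 : t ≠ 0 := by omega
    have ht1 : 1 ≤ |t| := by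
      rcases le_or_gt 0 t with h | h
      · rw [abs_of_nonneg h]; omega
      · rw [abs_of_neg h]; omega
    have ht2 : |t| ≤ q := by
      rcases le_or_gt 0 t with h | h
      · rw [abs_of_nonneg h]; omega
      · rw [abs_of_neg h]; omega
    have hy : Real.pi - 2 * Real.pi * m / q = (Real.pi / q) * t := by
      rw [ht]
      push_cast
      field_simp
    have habs : |Real.pi - 2 * Real.pi * m / q| = (Real.pi / q) * |t| := by
      rw [hy, abs_mul, abs_of_pos hπq0, Int.cast_abs]
    have hb1 : Real.pi / q ≤ |Real.pi - 2 * Real.pi * m / q| := by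
      rw [habs]
      have : (1:ℝ) ≤ |t| := by exact_mod_cast ht1
      nlinarith
    have hb2 : |Real.pi - 2 * Real.pi * m / q| ≤ Real.pi := by
      rw [habs]
      have h2 : ((|t| : ℤ) : ℝ) ≤ q := by exact_mod_cast ht2
      calc Real.pi / q * |t| ≤ Real.pi / q * q := by
            apply mul_le_mul_of_nonneg_left _ (le_of_lt hπq0)
            exact_mod_cast h2
        _ = Real.pi := by field_simp
    have hkey : -(Real.cos (Real.pi / q)) ≤ Real.cos (2 * Real.pi * m / q) := by
      have hc1 : Real.cos (Real.pi - 2 * Real.pi * m / q) ≤ Real.cos (Real.pi / q) := by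
        rw [← Real.cos_abs (Real.pi - 2 * Real.pi * m / q)]
        exact Real.cos_le_cos_of_nonneg_of_le_pi (le_of_lt hπq0) hb2 hb1
      rw [Real.cos_pi_sub] at hc1
      linarith
    nlinarith

lemma exists_gram (q : ℕ) [NeZero q] (hq : 4 ≤ q) (β : ℝ)
    (hlam : ∀ j : ZMod q, 0 ≤ 1 + 2 * β * Real.cos (2 * Real.pi * j.val / q)) :
    ∃ B : ZMod q → ZMod q → ℝ,
      ∀ a b, Amat q β a b - (1 + 2 * β) / q = ∑ c : ZMod q, B c a * B c b := by
  set s : ℝ := 1 + 2 * β with hs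
  have hqR : (0:ℝ) < q := by exact_mod_cast (by omega : 0 < q)
  set M : Matrix (ZMod q) (ZMod q) ℝ := Matrix.of (fun a b => Amat q β a b - s / q) with hM
  have hquad : ∀ x : ZMod q → ℝ,
      0 ≤ ∑ a : ZMod q, ∑ b : ZMod q, x a * x b * M a b := by
    intro x
    set c : ℝ := (∑ a : ZMod q, x a) / q with hc
    set w : ZMod q → ℝ := fun a => x a - c with hw
    have hT : ∑ a : ZMod q, x a = c * q := by rw [hc]; field_simp
    have hpt : ∀ a b : ZMod q, w a * w b * Amat q β a b
        = x a * x b * Amat q β a b - c * (x b * Amat q β a b)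
          - c * (x a * Amat q β a b) + c ^ 2 * Amat q β a b := by
      intro a b; rw [hw]; ring
    have hsum1 : ∑ a : ZMod q, ∑ b : ZMod q, x b * Amat q β a b
        = s * (c * q) := by
      calc ∑ a : ZMod q, ∑ b : ZMod q, x b * Amat q β a b
          = ∑ b : ZMod q, ∑ a : ZMod q, x b * Amat q β a b := Finset.sum_comm
        _ = ∑ b : ZMod q, x b * s := by
            refine Finset.sum_congr rfl (fun b _ => ?_)
            rw [← Finset.mul_sum, Amat_col q hq β b]
        _ = (∑ b : ZMod q, x b) * s := by rw [← Finset.sum_mul]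
        _ = s * (c * q) := by rw [hT]; ring
    have hsum2 : ∑ a : ZMod q, x a * ∑ b : ZMod q, Amat q β a b
        = s * (c * q) := by
      calc ∑ a : ZMod q, x a * ∑ b : ZMod q, Amat q β a b
          = ∑ a : ZMod q, x a * s := by
            refine Finset.sum_congr rfl (fun a _ => ?_)
            rw [Amat_row q hq β a]
        _ = (∑ a : ZMod q, x a) * s := by rw [← Finset.sum_mul]
        _ = s * (c * q) := by rw [hT]; ring
    have hsum3 : ∑ a : ZMod q, ∑ b : ZMod q, Amat q β a b = q * s := by
      rw [Finset.sum_congr rfl (fun a _ => by rw [Amat_row q hq β a, ← hs])]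
      rw [Finset.sum_const, Finset.card_univ, ZMod.card, nsmul_eq_mul]
    have hA : ∑ a : ZMod q, ∑ b : ZMod q, w a * w b * Amat q β a b
        = (∑ a : ZMod q, ∑ b : ZMod q, x a * x b * Amat q β a b) - s * c ^ 2 * q := by
      rw [Finset.sum_congr rfl (fun a _ => Finset.sum_congr rfl (fun b _ => hpt a b))]
      simp only [Finset.sum_add_distrib, Finset.sum_sub_distrib, ← Finset.mul_sum]
      rw [hsum1, hsum2, hsum3]
      ring
    have hMsplit : ∑ a : ZMod q, ∑ b : ZMod q, x a * x b * M a b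
        = (∑ a : ZMod q, ∑ b : ZMod q, x a * x b * Amat q β a b)
          - s / q * (c * q) ^ 2 := by
      have hpt2 : ∀ a b : ZMod q, x a * x b * M a b
          = x a * x b * Amat q β a b - s / q * (x a * x b) := by
        intro a b
        simp only [hM, Matrix.of_apply]
        ring
      rw [Finset.sum_congr rfl (fun a _ => Finset.sum_congr rfl (fun b _ => hpt2 a b))]
      simp only [Finset.sum_sub_distrib, ← Finset.mul_sum]
      rw [← Finset.sum_mul, hT]
      ring
    have hge := Amat_psd q hq β hlam w
    rw [hA] at hge
    rw [hMsplit]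
    have hexp : s / q * (c * q) ^ 2 = s * c ^ 2 * q := by field_simp
    rw [hexp]
    exact hge
  have hpsd : M.PosSemidef := by
    refine Matrix.PosSemidef.of_dotProduct_mulVec_nonneg ?_ ?_
    · ext a b
      simp only [Matrix.conjTranspose_apply, hM, Matrix.of_apply, star_trivial]
      rw [Amat_symm]
    · intro x
      have h2 : dotProduct (star x) (M.mulVec x)
          = ∑ a : ZMod q, ∑ b : ZMod q, x a * x b * M a b := by
        unfold dotProduct Matrix.mulVec
        refine Finset.sum_congr rfl (fun a _ => ?_)
        simp only [star_trivial, Pi.star_apply]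
        unfold dotProduct
        rw [Finset.mul_sum]
        exact Finset.sum_congr rfl (fun b _ => by ring)
      show 0 ≤ dotProduct (star x) (M.mulVec x)
      rw [h2]
      exact hquad x
  obtain ⟨B, hB⟩ := by open scoped MatrixOrder in exact CStarAlgebra.nonneg_iff_eq_star_mul_self.mp hpsd.nonneg
  refine ⟨fun c a => B c a, fun a b => ?_⟩
  have : M a b = ∑ c : ZMod q, B c a * B c b := by
    rw [hB]
    simp only [Matrix.mul_apply, Matrix.star_apply, star_trivial]
  simpa [hM] using this

lemma tensor_quad_nonneg (q : ℕ) [NeZero q] (n : ℕ) (M B : ZMod q → ZMod q → ℝ)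
    (hB : ∀ a b, M a b = ∑ c : ZMod q, B c a * B c b) (S : Finset (Fin n)) :
    ∀ f : (Fin n → ZMod q) → ℝ,
      0 ≤ ∑ x : Fin n → ZMod q, ∑ x' : Fin n → ZMod q,
        f x * f x' * ∏ k ∈ S, M (x k) (x' k) := by
  induction S using Finset.induction_on with
  | empty =>
    intro f
    simp only [Finset.prod_empty, mul_one]
    have h : ∑ x : Fin n → ZMod q, ∑ x' : Fin n → ZMod q, f x * f x'
        = (∑ x : Fin n → ZMod q, f x) ^ 2 := by
      rw [sq, Finset.sum_mul_sum]
    rw [h]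
    positivity
  | @insert k s hk ih =>
    intro f
    have step : ∀ x x' : Fin n → ZMod q,
        f x * f x' * ∏ j ∈ insert k s, M (x j) (x' j)
        = ∑ c : ZMod q, (f x * B c (x k)) * (f x' * B c (x' k)) * ∏ j ∈ s, M (x j) (x' j) := by
      intro x x'
      rw [Finset.prod_insert hk, hB (x k) (x' k), Finset.sum_mul, Finset.mul_sum]
      exact Finset.sum_congr rfl (fun c _ => by ring)
    rw [Finset.sum_congr rfl (fun x _ => Finset.sum_congr rfl (fun x' _ => step x x'))]
    rw [Finset.sum_congr rfl (fun x _ => Finset.sum_comm), Finset.sum_comm]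
    exact Finset.sum_nonneg (fun c _ => ih (fun y => f y * B c (y k)))

theorem stmt0 (q n : ℕ) [NeZero q] (hq : 4 ≤ q) (hn : 1 ≤ n)
    (ε ρ : ℝ) (hε : 0 < ε) (hε' : ε ≤ 1 / 2) (hρ : 1 ≤ ρ)
    (heven : Even q → alphaE ε ^ (1 / ρ) ≤ 1 / 2)
    (hodd : Odd q → alphaE ε ^ (1 / ρ) ≤ 1 / (2 * Real.cos (Real.pi / q))) :
    IsLeast
      {v : ℝ | ∃ P : (Fin n → ZMod q) → ℝ,
        (∀ x, 0 ≤ P x) ∧ (∑ x, P x = 1) ∧ v = Qn q n ε ρ P}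
      (((1 + 2 * alphaE ε ^ (1 / ρ)) / q) ^ n) := by
  set β : ℝ := alphaE ε ^ (1 / ρ) with hβdef
  have hρ0 : (0:ℝ) < ρ := by linarith
  have hρne : (1:ℝ)/ρ ≠ 0 := by positivity
  have hβ0 : 0 ≤ β := Real.rpow_nonneg (Real.sqrt_nonneg _) _
  have hqR : (0:ℝ) < q := by exact_mod_cast (by omega : 0 < q)
  have ht0 : (0:ℝ) ≤ (1 + 2*β) / q := by positivity
  have hg1A : ∀ a b : ZMod q, (g1 q ε a b) ^ (1/ρ) = Amat q β a b := by
    intro a b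
    rw [g1_eq q hq ε hε hε']
    unfold Amat
    split_ifs with h1 h2
    · exact Real.one_rpow _
    · rfl
    · exact Real.zero_rpow hρne
  have hg1nn : ∀ a b : ZMod q, 0 ≤ g1 q ε a b := by
    intro a b
    rw [g1_eq q hq ε hε hε']
    split_ifs
    · norm_num
    · exact Real.sqrt_nonneg _
    · exact le_refl _
  have hgnA : ∀ x x' : Fin n → ZMod q,
      (gn q n ε x x') ^ (1/ρ) = ∏ k, Amat q β (x k) (x' k) := by
    intro x x'
    unfold gn
    rw [← Real.finset_prod_rpow _ _ (fun k _ => hg1nn _ _) _]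
    exact Finset.prod_congr rfl (fun k _ => hg1A _ _)
  have hQn : ∀ P : (Fin n → ZMod q) → ℝ, Qn q n ε ρ P
      = ∑ x : Fin n → ZMod q, ∑ x' : Fin n → ZMod q,
          P x * P x' * ∏ k, Amat q β (x k) (x' k) := by
    intro P
    unfold Qn
    exact Finset.sum_congr rfl (fun x _ => Finset.sum_congr rfl (fun x' _ => by rw [hgnA]))
  have hcard : Fintype.card (Fin n → ZMod q) = q ^ n := by
    rw [Fintype.card_fun, ZMod.card, Fintype.card_fin]
  constructor
  · -- membership : uniform distribution
    refine ⟨fun _ => ((q:ℝ)^n)⁻¹, fun x => by positivity, ?_, ?_⟩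
    · rw [Finset.sum_const, Finset.card_univ, hcard, nsmul_eq_mul]
      push_cast
      field_simp
    · rw [hQn]
      have hrow : ∀ x : Fin n → ZMod q,
          ∑ x' : Fin n → ZMod q, ∏ k, Amat q β (x k) (x' k) = (1 + 2*β) ^ n := by
        intro x
        rw [← Fintype.prod_sum (fun k j => Amat q β (x k) j)]
        rw [Finset.prod_congr rfl (fun k _ => Amat_row q hq β (x k))]
        rw [Finset.prod_const, Finset.card_univ, Fintype.card_fin]
      calc ((1 + 2 * β) / q) ^ n
          = ∑ x : Fin n → ZMod q, ((q:ℝ)^n)⁻¹ * (((q:ℝ)^n)⁻¹ * (1 + 2*β)^n) := by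
            rw [Finset.sum_const, Finset.card_univ, hcard, nsmul_eq_mul, div_pow]
            push_cast
            field_simp
        _ = ∑ x : Fin n → ZMod q, ∑ x' : Fin n → ZMod q,
              ((q:ℝ)^n)⁻¹ * ((q:ℝ)^n)⁻¹ * ∏ k, Amat q β (x k) (x' k) := by
            refine Finset.sum_congr rfl (fun x _ => ?_)
            rw [← Finset.mul_sum, hrow x]
            ring
  · -- lower bound
    rintro v ⟨P, hP0, hP1, rfl⟩
    rw [hQn]
    have hlam := lam_nonneg q hq β hβ0 heven hodd
    obtain ⟨B, hBgram⟩ := exists_gram q hq β hlam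
    have hkey : ∀ x x' : Fin n → ZMod q,
        ∏ k, Amat q β (x k) (x' k)
        = ∑ S : Finset (Fin n), (∏ k ∈ S, (Amat q β (x k) (x' k) - (1 + 2*β)/q))
            * ((1 + 2*β)/q) ^ (Sᶜ.card) := by
      intro x x'
      have h1 : ∏ k, Amat q β (x k) (x' k)
          = ∏ k, ((Amat q β (x k) (x' k) - (1 + 2*β)/q) + (1 + 2*β)/q) :=
        Finset.prod_congr rfl (fun k _ => by ring)
      rw [h1, Fintype.prod_add]
      refine Finset.sum_congr rfl (fun S _ => ?_)
      rw [Finset.prod_const]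
    calc ((1 + 2 * β) / q) ^ n
        = (∑ x : Fin n → ZMod q, ∑ x' : Fin n → ZMod q, P x * P x' *
            ∏ k ∈ (∅ : Finset (Fin n)), (Amat q β (x k) (x' k) - (1 + 2*β)/q))
          * ((1 + 2*β)/q) ^ ((∅ : Finset (Fin n))ᶜ.card) := by
          simp only [Finset.prod_empty, mul_one, Finset.compl_empty]
          rw [Finset.card_univ, Fintype.card_fin]
          have : ∑ x : Fin n → ZMod q, ∑ x' : Fin n → ZMod q, P x * P x'
              = (∑ x : Fin n → ZMod q, P x) ^ 2 := by rw [sq, Finset.sum_mul_sum]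
          rw [this, hP1]
          ring
      _ ≤ ∑ S : Finset (Fin n),
            (∑ x : Fin n → ZMod q, ∑ x' : Fin n → ZMod q, P x * P x' *
              ∏ k ∈ S, (Amat q β (x k) (x' k) - (1 + 2*β)/q))
            * ((1 + 2*β)/q) ^ (Sᶜ.card) := by
          apply Finset.single_le_sum (f := fun S : Finset (Fin n) =>
            (∑ x : Fin n → ZMod q, ∑ x' : Fin n → ZMod q, P x * P x' *
              ∏ k ∈ S, (Amat q β (x k) (x' k) - (1 + 2*β)/q))
            * ((1 + 2*β)/q) ^ (Sᶜ.card))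
          · intro S _
            apply mul_nonneg
            · exact tensor_quad_nonneg q n _ B hBgram S P
            · exact pow_nonneg ht0 _
          · exact Finset.mem_univ _
      _ = ∑ S : Finset (Fin n), ∑ x : Fin n → ZMod q, ∑ x' : Fin n → ZMod q,
            (P x * P x' * ∏ k ∈ S, (Amat q β (x k) (x' k) - (1 + 2*β)/q))
              * ((1 + 2*β)/q) ^ (Sᶜ.card) := by
          refine Finset.sum_congr rfl (fun S _ => ?_)
          rw [Finset.sum_mul]
          exact Finset.sum_congr rfl (fun x _ => by rw [Finset.sum_mul])
      _ = ∑ x : Fin n → ZMod q, ∑ S : Finset (Fin n), ∑ x' : Fin n → ZMod q,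
            (P x * P x' * ∏ k ∈ S, (Amat q β (x k) (x' k) - (1 + 2*β)/q))
              * ((1 + 2*β)/q) ^ (Sᶜ.card) := Finset.sum_comm
      _ = ∑ x : Fin n → ZMod q, ∑ x' : Fin n → ZMod q, ∑ S : Finset (Fin n),
            (P x * P x' * ∏ k ∈ S, (Amat q β (x k) (x' k) - (1 + 2*β)/q))
              * ((1 + 2*β)/q) ^ (Sᶜ.card) :=
          Finset.sum_congr rfl (fun x _ => Finset.sum_comm)
      _ = ∑ x : Fin n → ZMod q, ∑ x' : Fin n → ZMod q,
            P x * P x' * ∏ k, Amat q β (x k) (x' k) := by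
          refine Finset.sum_congr rfl (fun x _ => Finset.sum_congr rfl (fun x' _ => ?_))
          rw [hkey x x', Finset.mul_sum]
          exact Finset.sum_congr rfl (fun S _ => by ring)
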